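/- Let Γ be a finite connected G-vertex-transitive non-complete graph of girth 3. Then Γ is (G,3)-CH if and only if for a vertex v, the stabilizer G_v induces on Γ(v) a transitive permutation group of rank 3. -/

import Mathlib

open SimpleGraph

variable {V : Type*}

/-- `Γ` is `(G,3)`-connected-homogeneous: every isomorphism between connected induced
subgraphs of order at most 3 extends to an automorphism in `G`. -/
def IsCH3 (Γ : SimpleGraph V) (G : Subgroup (Γ ≃g Γ)) : Prop :=
  ∀ (A B : Set V), A.ncard ≤ 3 → (SimpleGraph.induce A Γ).Connected →
    ∀ φ : (SimpleGraph.induce A Γ) ≃g (SimpleGraph.induce B Γ),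
      ∃ g ∈ G, ∀ a : A, (g : Γ ≃g Γ) a.1 = ((φ a) : V)

/-- `G` is transitive on the vertices of `Γ`. -/
def VertexTrans (Γ : SimpleGraph V) (G : Subgroup (Γ ≃g Γ)) : Prop :=
  ∀ u v : V, ∃ g ∈ G, (g : Γ ≃g Γ) u = v

/-- The stabiliser of `u` in `G` is transitive on the neighbourhood of `u`. -/
def StabTrans (Γ : SimpleGraph V) (G : Subgroup (Γ ≃g Γ)) (u : V) : Prop :=
  ∀ v ∈ Γ.neighborSet u, ∀ w ∈ Γ.neighborSet u,
    ∃ g ∈ G, (g : Γ ≃g Γ) u = u ∧ (g : Γ ≃g Γ) v = w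

/-- The stabiliser of `u` in `G` is 2-transitive on the neighbourhood of `u`. -/
def Stab2Trans (Γ : SimpleGraph V) (G : Subgroup (Γ ≃g Γ)) (u : V) : Prop :=
  StabTrans Γ G u ∧
  ∀ v w v' w', v ∈ Γ.neighborSet u → w ∈ Γ.neighborSet u →
    v' ∈ Γ.neighborSet u → w' ∈ Γ.neighborSet u → v ≠ w → v' ≠ w' →
    ∃ g ∈ G, (g : Γ ≃g Γ) u = u ∧ (g : Γ ≃g Γ) v = v' ∧ (g : Γ ≃g Γ) w = w'

/-- Two ordered pairs are equivalent under the stabiliser of `u` in `G`. -/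
def PairEquiv (Γ : SimpleGraph V) (G : Subgroup (Γ ≃g Γ)) (u : V) (p q : V × V) : Prop :=
  ∃ g ∈ G, (g : Γ ≃g Γ) u = u ∧ (g : Γ ≃g Γ) p.1 = q.1 ∧ (g : Γ ≃g Γ) p.2 = q.2

/-- The stabiliser of `u` in `G` induces on the neighbourhood of `u` a transitive group
of rank 3: it is transitive, and it has exactly three orbits on ordered pairs of
neighbours of `u`. -/
def StabRank3 (Γ : SimpleGraph V) (G : Subgroup (Γ ≃g Γ)) (u : V) : Prop :=
  StabTrans Γ G u ∧
  ∃ p₁ p₂ p₃ : V × V,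
    (p₁.1 ∈ Γ.neighborSet u ∧ p₁.2 ∈ Γ.neighborSet u) ∧
    (p₂.1 ∈ Γ.neighborSet u ∧ p₂.2 ∈ Γ.neighborSet u) ∧
    (p₃.1 ∈ Γ.neighborSet u ∧ p₃.2 ∈ Γ.neighborSet u) ∧
    ¬ PairEquiv Γ G u p₁ p₂ ∧ ¬ PairEquiv Γ G u p₁ p₃ ∧ ¬ PairEquiv Γ G u p₂ p₃ ∧
    ∀ q : V × V, q.1 ∈ Γ.neighborSet u → q.2 ∈ Γ.neighborSet u →
      PairEquiv Γ G u p₁ q ∨ PairEquiv Γ G u p₂ q ∨ PairEquiv Γ G u p₃ q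

/-- A graph is complete multipartite iff non-adjacency is transitive. -/
def IsCompleteMultipartite (Γ : SimpleGraph V) : Prop :=
  Transitive fun x y => ¬ Γ.Adj x y

/-- The disjoint union `rKℓ` of `r` complete graphs on `ℓ` vertices. -/
def cliquesGraph (r ℓ : ℕ) : SimpleGraph (Fin r × Fin ℓ) where
  Adj x y := x.1 = y.1 ∧ x.2 ≠ y.2
  symm := ⟨fun x y h => ⟨h.1.symm, h.2.symm⟩⟩
  loopless := ⟨fun x h => h.2 rfl⟩


/- ------- auxiliary lemmas ------- -/
namespace CH3Aux

variable {Γ : SimpleGraph V} {G : Subgroup (Γ ≃g Γ)}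

lemma fix_inv {g : Γ ≃g Γ} {u : V} (h : g u = u) : g⁻¹ u = u := by
  have : g⁻¹ (g u) = u := RelIso.inv_apply_self g u
  rwa [h] at this

lemma pe_symm {u : V} {p q : V × V} (h : PairEquiv Γ G u p q) : PairEquiv Γ G u q p := by
  obtain ⟨g, hg, h1, h2, h3⟩ := h
  refine ⟨g⁻¹, inv_mem hg, fix_inv h1, ?_, ?_⟩
  · have : g⁻¹ (g p.1) = p.1 := RelIso.inv_apply_self g p.1
    rwa [h2] at this
  · have : g⁻¹ (g p.2) = p.2 := RelIso.inv_apply_self g p.2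
    rwa [h3] at this

lemma pe_trans {u : V} {p q r : V × V} (h : PairEquiv Γ G u p q)
    (h' : PairEquiv Γ G u q r) : PairEquiv Γ G u p r := by
  obtain ⟨g, hg, h1, h2, h3⟩ := h
  obtain ⟨g', hg', h1', h2', h3'⟩ := h'
  exact ⟨g' * g, mul_mem hg' hg,
    by rw [RelIso.mul_apply, h1, h1'], by rw [RelIso.mul_apply, h2, h2'],
    by rw [RelIso.mul_apply, h3, h3']⟩

open Classical in
noncomputable def pclass (Γ : SimpleGraph V) (p : V × V) : ℕ :=
  if p.1 = p.2 then 0 else if Γ.Adj p.1 p.2 then 1 else 2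

lemma pclass_diag {p : V × V} (h : p.1 = p.2) : pclass Γ p = 0 := by
  simp [pclass, h]

lemma pclass_adj {p : V × V} (h : Γ.Adj p.1 p.2) : pclass Γ p = 1 := by
  simp [pclass, h, h.ne]

lemma pclass_nonadj {p : V × V} (h1 : p.1 ≠ p.2) (h2 : ¬ Γ.Adj p.1 p.2) :
    pclass Γ p = 2 := by
  simp [pclass, h1, h2]

lemma pclass_inv {u : V} {p q : V × V} (h : PairEquiv Γ G u p q) :
    pclass Γ p = pclass Γ q := by
  obtain ⟨g, _, _, h2, h3⟩ := h
  have e1 : p.1 = p.2 ↔ q.1 = q.2 := by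
    rw [← h2, ← h3]; exact (g.toEquiv.injective.eq_iff).symm
  have e2 : Γ.Adj p.1 p.2 ↔ Γ.Adj q.1 q.2 := by
    rw [← h2, ← h3]; exact g.map_rel_iff.symm
  by_cases hd : p.1 = p.2
  · rw [pclass_diag hd, pclass_diag (e1.mp hd)]
  · by_cases ha : Γ.Adj p.1 p.2
    · rw [pclass_adj ha, pclass_adj (e2.mp ha)]
    · rw [pclass_nonadj hd ha,
        pclass_nonadj (fun hh => hd (e1.mpr hh)) (fun hh => ha (e2.mpr hh))]

lemma exists_step {W : Type*} {H : SimpleGraph W} {x y : W} (hxy : x ≠ y)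
    (h : H.Reachable x y) : ∃ z, H.Adj x z := by
  obtain ⟨w⟩ := h
  cases w with
  | nil => exact absurd rfl hxy
  | cons h _ => exact ⟨_, h⟩

lemma conn_pair {v w : V} (h : Γ.Adj v w) :
    (SimpleGraph.induce ({v, w} : Set V) Γ).Connected := by
  have hadj : (SimpleGraph.induce ({v, w} : Set V) Γ).Adj ⟨v, by simp⟩ ⟨w, by simp⟩ := by
    simpa using h
  rw [connected_iff]
  refine ⟨?_, ⟨⟨v, by simp⟩⟩⟩
  rintro ⟨x, hx⟩ ⟨y, hy⟩
  simp only [Set.mem_insert_iff, Set.mem_singleton_iff] at hx hy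
  rcases hx with rfl | rfl <;> rcases hy with rfl | rfl
  · exact Reachable.refl _
  · exact hadj.reachable
  · exact hadj.symm.reachable
  · exact Reachable.refl _

lemma conn_triple {v a b : V} (h1 : Γ.Adj v a) (h2 : Γ.Adj v b) :
    (SimpleGraph.induce ({v, a, b} : Set V) Γ).Connected := by
  have hadj1 : (SimpleGraph.induce ({v, a, b} : Set V) Γ).Adj ⟨v, by simp⟩ ⟨a, by simp⟩ := by
    simpa using h1
  have hadj2 : (SimpleGraph.induce ({v, a, b} : Set V) Γ).Adj ⟨v, by simp⟩ ⟨b, by simp⟩ := by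
    simpa using h2
  have key : ∀ x : ({v, a, b} : Set V),
      (SimpleGraph.induce ({v, a, b} : Set V) Γ).Reachable ⟨v, by simp⟩ x := by
    rintro ⟨x, hx⟩
    simp only [Set.mem_insert_iff, Set.mem_singleton_iff] at hx
    rcases hx with rfl | rfl | rfl
    · exact Reachable.refl _
    · exact hadj1.reachable
    · exact hadj2.reachable
  rw [connected_iff]
  exact ⟨fun x y => (key x).symm.trans (key y), ⟨⟨v, by simp⟩⟩⟩

lemma card_pair {v w : V} : ({v, w} : Set V).ncard ≤ 3 := by
  have := Set.ncard_insert_le v ({w} : Set V)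
  simp only [Set.ncard_singleton] at this; omega

lemma card_triple {v a b : V} : ({v, a, b} : Set V).ncard ≤ 3 := by
  have h1 := Set.ncard_insert_le v ({a, b} : Set V)
  have h2 := Set.ncard_insert_le a ({b} : Set V)
  simp only [Set.ncard_singleton] at h2; omega

lemma extend2 (hCH : IsCH3 Γ G) {v w v' w' : V} (h : Γ.Adj v w) (h' : Γ.Adj v' w') :
    ∃ g ∈ G, (g : Γ ≃g Γ) v = v' ∧ (g : Γ ≃g Γ) w = w' := by
  classical
  set f : V → V := fun x => if x = v then v' else w' with hf
  set f' : V → V := fun x => if x = v' then v else w with hf'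
  have hfv : f v = v' := by simp [hf]
  have hfw : f w = w' := by simp [hf, h.ne']
  have hfv' : f' v' = v := by simp [hf']
  have hfw' : f' w' = w := by simp [hf', h'.ne']
  have hmem : ∀ x : ({v, w} : Set V), f x.1 ∈ ({v', w'} : Set V) := by
    rintro ⟨x, hx⟩
    simp only [Set.mem_insert_iff, Set.mem_singleton_iff] at hx
    rcases hx with rfl | rfl
    · rw [show f x = v' from hfv]; simp
    · rw [show f x = w' from hfw]; simp
  have hmem' : ∀ x : ({v', w'} : Set V), f' x.1 ∈ ({v, w} : Set V) := by
    rintro ⟨x, hx⟩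
    simp only [Set.mem_insert_iff, Set.mem_singleton_iff] at hx
    rcases hx with rfl | rfl
    · rw [show f' x = v from hfv']; simp
    · rw [show f' x = w from hfw']; simp
  let e : ({v, w} : Set V) ≃ ({v', w'} : Set V) :=
  { toFun := fun x => ⟨f x.1, hmem x⟩
    invFun := fun y => ⟨f' y.1, hmem' y⟩
    left_inv := by
      rintro ⟨x, hx⟩
      simp only [Set.mem_insert_iff, Set.mem_singleton_iff] at hx
      apply Subtype.ext
      rcases hx with rfl | rfl
      · show f' (f x) = x; rw [hfv, hfv']
      · show f' (f x) = x; rw [hfw, hfw']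
    right_inv := by
      rintro ⟨y, hy⟩
      simp only [Set.mem_insert_iff, Set.mem_singleton_iff] at hy
      apply Subtype.ext
      rcases hy with rfl | rfl
      · show f (f' y) = y; rw [hfv', hfv]
      · show f (f' y) = y; rw [hfw', hfw] }
  have hev : (e ⟨v, by simp⟩ : V) = v' := hfv
  have hew : (e ⟨w, by simp⟩ : V) = w' := hfw
  let φ : (SimpleGraph.induce ({v, w} : Set V) Γ) ≃g
      (SimpleGraph.induce ({v', w'} : Set V) Γ) :=
  { toEquiv := e
    map_rel_iff' := by
      rintro ⟨x, hx⟩ ⟨y, hy⟩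
      simp only [Set.mem_insert_iff, Set.mem_singleton_iff] at hx hy
      show Γ.Adj (f x) (f y) ↔ Γ.Adj x y
      rcases hx with rfl | rfl <;> rcases hy with rfl | rfl <;>
        simp [hf, h.ne', h, h', h.symm, h'.symm, Γ.adj_comm] }
  obtain ⟨g, hg, hall⟩ := hCH {v, w} {v', w'} card_pair (conn_pair h) φ
  refine ⟨g, hg, ?_, ?_⟩
  · exact (hall ⟨v, by simp⟩).trans hev
  · exact (hall ⟨w, by simp⟩).trans hew

lemma extend3 (hCH : IsCH3 Γ G) {v a b v' a' b' : V}
    (hva : Γ.Adj v a) (hvb : Γ.Adj v b) (hab : a ≠ b)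
    (hva' : Γ.Adj v' a') (hvb' : Γ.Adj v' b') (hab' : a' ≠ b')
    (hiff : Γ.Adj a b ↔ Γ.Adj a' b') :
    ∃ g ∈ G, (g : Γ ≃g Γ) v = v' ∧ (g : Γ ≃g Γ) a = a' ∧ (g : Γ ≃g Γ) b = b' := by
  classical
  set f : V → V := fun x => if x = v then v' else if x = a then a' else b' with hf
  set f' : V → V := fun x => if x = v' then v else if x = a' then a else b with hf'
  have hfv : f v = v' := by simp [hf]
  have hfa : f a = a' := by simp [hf, hva.ne']
  have hfb : f b = b' := by simp [hf, hvb.ne', Ne.symm hab]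
  have hfv' : f' v' = v := by simp [hf']
  have hfa' : f' a' = a := by simp [hf', hva'.ne']
  have hfb' : f' b' = b := by simp [hf', hvb'.ne', Ne.symm hab']
  have hmem : ∀ x : ({v, a, b} : Set V), f x.1 ∈ ({v', a', b'} : Set V) := by
    rintro ⟨x, hx⟩
    simp only [Set.mem_insert_iff, Set.mem_singleton_iff] at hx
    rcases hx with rfl | rfl | rfl
    · rw [show f x = v' from hfv]; simp
    · rw [show f x = a' from hfa]; simp
    · rw [show f x = b' from hfb]; simp
  have hmem' : ∀ x : ({v', a', b'} : Set V), f' x.1 ∈ ({v, a, b} : Set V) := by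
    rintro ⟨x, hx⟩
    simp only [Set.mem_insert_iff, Set.mem_singleton_iff] at hx
    rcases hx with rfl | rfl | rfl
    · rw [show f' x = v from hfv']; simp
    · rw [show f' x = a from hfa']; simp
    · rw [show f' x = b from hfb']; simp
  let e : ({v, a, b} : Set V) ≃ ({v', a', b'} : Set V) :=
  { toFun := fun x => ⟨f x.1, hmem x⟩
    invFun := fun y => ⟨f' y.1, hmem' y⟩
    left_inv := by
      rintro ⟨x, hx⟩
      simp only [Set.mem_insert_iff, Set.mem_singleton_iff] at hx
      apply Subtype.ext
      rcases hx with rfl | rfl | rfl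
      · show f' (f x) = x; rw [hfv, hfv']
      · show f' (f x) = x; rw [hfa, hfa']
      · show f' (f x) = x; rw [hfb, hfb']
    right_inv := by
      rintro ⟨y, hy⟩
      simp only [Set.mem_insert_iff, Set.mem_singleton_iff] at hy
      apply Subtype.ext
      rcases hy with rfl | rfl | rfl
      · show f (f' y) = y; rw [hfv', hfv]
      · show f (f' y) = y; rw [hfa', hfa]
      · show f (f' y) = y; rw [hfb', hfb] }
  have hev : (e ⟨v, by simp⟩ : V) = v' := hfv
  have hea : (e ⟨a, by simp⟩ : V) = a' := hfa
  have heb : (e ⟨b, by simp⟩ : V) = b' := hfb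
  let φ : (SimpleGraph.induce ({v, a, b} : Set V) Γ) ≃g
      (SimpleGraph.induce ({v', a', b'} : Set V) Γ) :=
  { toEquiv := e
    map_rel_iff' := by
      rintro ⟨x, hx⟩ ⟨y, hy⟩
      simp only [Set.mem_insert_iff, Set.mem_singleton_iff] at hx hy
      show Γ.Adj (f x) (f y) ↔ Γ.Adj x y
      rcases hx with rfl | rfl | rfl <;> rcases hy with rfl | rfl | rfl
      · rw [hfv]; simp
      · rw [hfv, hfa]; simp [hva, hva']
      · rw [hfv, hfb]; simp [hvb, hvb']
      · rw [hfv, hfa]; simp [hva.symm, hva'.symm]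
      · rw [hfa]; simp
      · rw [hfa, hfb]; exact hiff.symm
      · rw [hfv, hfb]; simp [hvb.symm, hvb'.symm]
      · rw [hfa, hfb]
        exact ⟨fun hh => (hiff.mpr hh.symm).symm, fun hh => (hiff.mp hh.symm).symm⟩
      · rw [hfb]; simp }
  obtain ⟨g, hg, hall⟩ := hCH {v, a, b} {v', a', b'} card_triple (conn_triple hva hvb) φ
  refine ⟨g, hg, ?_, ?_, ?_⟩
  · exact (hall ⟨v, by simp⟩).trans hev
  · exact (hall ⟨a, by simp⟩).trans hea
  · exact (hall ⟨b, by simp⟩).trans heb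

end CH3Aux

namespace CH3Aux
variable {Γ : SimpleGraph V} {G : Subgroup (Γ ≃g Γ)}

lemma exists_triangle (hgirth : Γ.girth = 3) :
    ∃ a b c : V, Γ.Adj a b ∧ Γ.Adj a c ∧ Γ.Adj b c := by
  have hna : ¬ Γ.IsAcyclic := by
    intro h
    rw [h.girth_eq_zero] at hgirth
    exact absurd hgirth (by norm_num)
  obtain ⟨a, w, hc, hl⟩ := (SimpleGraph.exists_girth_eq_length (G := Γ)).mpr hna
  rw [hgirth] at hl
  cases w with
  | nil => simp at hl
  | cons h1 p =>
    cases p with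
    | nil => simp at hl
    | cons h2 p2 =>
      cases p2 with
      | nil => simp at hl
      | cons h3 p3 =>
        have hp3 : p3.length = 0 := by
          simp only [SimpleGraph.Walk.length_cons] at hl
          omega
        have := SimpleGraph.Walk.eq_of_length_eq_zero hp3
        subst this
        exact ⟨_, _, _, h1, h3.symm, h2⟩

lemma exists_nonadj (hnc : Γ ≠ ⊤) : ∃ x y : V, x ≠ y ∧ ¬ Γ.Adj x y := by
  by_contra hcon
  push_neg at hcon
  apply hnc
  ext x y
  simp only [top_adj]
  exact ⟨fun h => h.ne, fun h => hcon x y h⟩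

lemma exists_nonadj_nbrs (hconn : Γ.Connected) (hnc : Γ ≠ ⊤) :
    ∃ v a b : V, Γ.Adj v a ∧ Γ.Adj v b ∧ a ≠ b ∧ ¬ Γ.Adj a b := by
  by_contra hcon
  push_neg at hcon
  obtain ⟨x, y, hxy, hnadj⟩ := exists_nonadj hnc
  have key : ∀ {p q : V}, Γ.Reachable p q → p = q ∨ Γ.Adj p q := by
    intro p q hr
    obtain ⟨w⟩ := hr
    induction w with
    | nil => exact Or.inl rfl
    | @cons pp qq rr h p ih =>
      rcases ih with rfl | hadj
      · exact Or.inr h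
      · by_cases hequ : pp = rr
        · exact Or.inl hequ
        · exact Or.inr (hcon qq pp rr h.symm hadj hequ)
  rcases key (hconn.preconnected x y) with rfl | h
  · exact hxy rfl
  · exact hnadj h

/-- transport a configuration by an automorphism -/
lemma adj_map (g : Γ ≃g Γ) {x y : V} (h : Γ.Adj x y) : Γ.Adj (g x) (g y) :=
  g.map_rel_iff.mpr h

lemma w1 (hvt : VertexTrans Γ G) (hgirth : Γ.girth = 3) (u : V) :
    ∃ n, Γ.Adj u n := by
  obtain ⟨a, b, c, hab, _, _⟩ := exists_triangle (Γ := Γ) hgirth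
  obtain ⟨g, _, hga⟩ := hvt a u
  exact ⟨g b, hga ▸ adj_map g hab⟩

lemma w2 (hvt : VertexTrans Γ G) (hgirth : Γ.girth = 3) (u : V) :
    ∃ s t, Γ.Adj u s ∧ Γ.Adj u t ∧ Γ.Adj s t := by
  obtain ⟨a, b, c, hab, hac, hbc⟩ := exists_triangle (Γ := Γ) hgirth
  obtain ⟨g, _, hga⟩ := hvt a u
  exact ⟨g b, g c, hga ▸ adj_map g hab, hga ▸ adj_map g hac, adj_map g hbc⟩

lemma w3 (hconn : Γ.Connected) (hvt : VertexTrans Γ G) (hnc : Γ ≠ ⊤) (u : V) :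
    ∃ s t, Γ.Adj u s ∧ Γ.Adj u t ∧ s ≠ t ∧ ¬ Γ.Adj s t := by
  obtain ⟨v, a, b, hva, hvb, hab, hnadj⟩ := exists_nonadj_nbrs (Γ := Γ) hconn hnc
  obtain ⟨g, _, hgv⟩ := hvt v u
  refine ⟨g a, g b, hgv ▸ adj_map g hva, hgv ▸ adj_map g hvb,
    fun h => hab (g.toEquiv.injective h), fun h => hnadj (g.map_rel_iff.mp h)⟩

lemma move_edge (hvt : VertexTrans Γ G) (hst : ∀ u : V, StabTrans Γ G u)
    {v w v' w' : V} (h : Γ.Adj v w) (h' : Γ.Adj v' w') :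
    ∃ g ∈ G, (g : Γ ≃g Γ) v = v' ∧ (g : Γ ≃g Γ) w = w' := by
  obtain ⟨g1, hg1, hg1v⟩ := hvt v v'
  have h1 : Γ.Adj v' (g1 w) := hg1v ▸ adj_map g1 h
  obtain ⟨g2, hg2, hg2v, hg2w⟩ := hst v' (g1 w) (by simpa using h1) w' (by simpa using h')
  refine ⟨g2 * g1, mul_mem hg2 hg1, ?_, ?_⟩
  · rw [RelIso.mul_apply, hg1v, hg2v]
  · rw [RelIso.mul_apply, hg2w]

lemma pair_equiv_of_same_type (hconn : Γ.Connected) (hvt : VertexTrans Γ G)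
    (hnc : Γ ≠ ⊤) (hgirth : Γ.girth = 3) (hr : ∀ v : V, StabRank3 Γ G v)
    {u x y x' y' : V} (hx : Γ.Adj u x) (hy : Γ.Adj u y) (hx' : Γ.Adj u x')
    (hy' : Γ.Adj u y') (hne : x ≠ y) (hne' : x' ≠ y')
    (hiff : Γ.Adj x y ↔ Γ.Adj x' y') :
    PairEquiv Γ G u (x, y) (x', y') := by
  obtain ⟨hst, p₁, p₂, p₃, hp₁, hp₂, hp₃, n12, n13, n23, cover⟩ := hr u
  obtain ⟨n, hn⟩ := w1 hvt hgirth u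
  obtain ⟨s, t, hus, hut, hst'⟩ := w2 hvt hgirth u
  obtain ⟨s2, t2, hus2, hut2, hst2, hnadj2⟩ := w3 hconn hvt hnc u
  have h0 : pclass Γ p₁ = 0 ∨ pclass Γ p₂ = 0 ∨ pclass Γ p₃ = 0 := by
    rcases cover (n, n) (by simpa using hn) (by simpa using hn) with h | h | h
    · exact Or.inl ((pclass_inv h).trans (pclass_diag rfl))
    · exact Or.inr (Or.inl ((pclass_inv h).trans (pclass_diag rfl)))
    · exact Or.inr (Or.inr ((pclass_inv h).trans (pclass_diag rfl)))
  have h1 : pclass Γ p₁ = 1 ∨ pclass Γ p₂ = 1 ∨ pclass Γ p₃ = 1 := by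
    rcases cover (s, t) (by simpa using hus) (by simpa using hut) with h | h | h
    · exact Or.inl ((pclass_inv h).trans (pclass_adj hst'))
    · exact Or.inr (Or.inl ((pclass_inv h).trans (pclass_adj hst')))
    · exact Or.inr (Or.inr ((pclass_inv h).trans (pclass_adj hst')))
  have h2 : pclass Γ p₁ = 2 ∨ pclass Γ p₂ = 2 ∨ pclass Γ p₃ = 2 := by
    rcases cover (s2, t2) (by simpa using hus2) (by simpa using hut2) with h | h | h
    · exact Or.inl ((pclass_inv h).trans (pclass_nonadj hst2 hnadj2))
    · exact Or.inr (Or.inl ((pclass_inv h).trans (pclass_nonadj hst2 hnadj2)))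
    · exact Or.inr (Or.inr ((pclass_inv h).trans (pclass_nonadj hst2 hnadj2)))
  have hd12 : pclass Γ p₁ ≠ pclass Γ p₂ := by omega
  have hd13 : pclass Γ p₁ ≠ pclass Γ p₃ := by omega
  have hd23 : pclass Γ p₂ ≠ pclass Γ p₃ := by omega
  have hcxy : pclass Γ ((x, y) : V × V) = pclass Γ ((x', y') : V × V) := by
    by_cases hadj : Γ.Adj x y
    · rw [pclass_adj hadj, pclass_adj (hiff.mp hadj)]
    · rw [pclass_nonadj hne hadj, pclass_nonadj hne' (fun hh => hadj (hiff.mpr hh))]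
  rcases cover (x, y) (by simpa using hx) (by simpa using hy) with e1 | e1 | e1 <;>
    rcases cover (x', y') (by simpa using hx') (by simpa using hy') with e2 | e2 | e2 <;>
    [skip; skip; skip; skip; skip; skip; skip; skip; skip] <;>
    first
      | exact pe_trans (pe_symm e1) e2
      | (exfalso
         have a1 := pclass_inv e1
         have a2 := pclass_inv e2
         omega)

end CH3Aux


/-- **Lemma 3.1.** Let `Γ` be a finite connected `G`-vertex-transitive non-complete
graph of girth 3.  Then `Γ` is `(G,3)`-CH iff for each vertex `v` the stabiliser
`G_v` induces on `Γ(v)` a transitive permutation group of rank 3. -/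
theorem ch3_iff_locally_rank3 {V : Type*} [Fintype V]
    (Γ : SimpleGraph V) (G : Subgroup (Γ ≃g Γ))
    (hconn : Γ.Connected) (hvt : VertexTrans Γ G)
    (hnc : Γ ≠ ⊤) (hgirth : Γ.girth = 3) :
    IsCH3 Γ G ↔ ∀ v : V, StabRank3 Γ G v := by
  constructor
  · -- forward direction
    intro hCH u
    obtain ⟨n, hn⟩ := CH3Aux.w1 hvt hgirth u
    obtain ⟨s, t, hus, hut, hstA⟩ := CH3Aux.w2 hvt hgirth u
    obtain ⟨s2, t2, hus2, hut2, hst2, hnadj2⟩ := CH3Aux.w3 hconn hvt hnc u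
    have hstab : StabTrans Γ G u := by
      intro v hv w hw
      simp only [mem_neighborSet] at hv hw
      obtain ⟨g, hg, h1, h2⟩ := CH3Aux.extend2 hCH hv hw
      exact ⟨g, hg, h1, h2⟩
    refine ⟨hstab, (n, n), (s, t), (s2, t2), ⟨by simpa using hn, by simpa using hn⟩,
      ⟨by simpa using hus, by simpa using hut⟩,
      ⟨by simpa using hus2, by simpa using hut2⟩, ?_, ?_, ?_, ?_⟩
    · intro h
      have := CH3Aux.pclass_inv h
      rw [CH3Aux.pclass_diag rfl, CH3Aux.pclass_adj hstA] at this
      omega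
    · intro h
      have := CH3Aux.pclass_inv h
      rw [CH3Aux.pclass_diag rfl, CH3Aux.pclass_nonadj hst2 hnadj2] at this
      omega
    · intro h
      have := CH3Aux.pclass_inv h
      rw [CH3Aux.pclass_adj hstA, CH3Aux.pclass_nonadj hst2 hnadj2] at this
      omega
    · rintro ⟨x, y⟩ hqx hqy
      simp only [mem_neighborSet] at hqx hqy
      by_cases hxy : x = y
      · subst hxy
        obtain ⟨g, hg, h1, h2⟩ := CH3Aux.extend2 hCH hn hqx
        exact Or.inl ⟨g, hg, h1, h2, h2⟩
      · by_cases hadj : Γ.Adj x y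
        · obtain ⟨g, hg, h1, h2, h3⟩ :=
            CH3Aux.extend3 hCH hus hut hstA.ne hqx hqy hxy (iff_of_true hstA hadj)
          exact Or.inr (Or.inl ⟨g, hg, h1, h2, h3⟩)
        · obtain ⟨g, hg, h1, h2, h3⟩ :=
            CH3Aux.extend3 hCH hus2 hut2 hst2 hqx hqy hxy (iff_of_false hnadj2 hadj)
          exact Or.inr (Or.inr ⟨g, hg, h1, h2, h3⟩)
  · -- backward direction
    intro hr A B hcard hconA φ
    have hne : A.Nonempty := Set.nonempty_coe_sort.mp hconA.nonempty
    have hfin : A.Finite := A.toFinite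
    have hpos : 0 < A.ncard := (Set.ncard_pos hfin).mpr hne
    have hsizes : A.ncard = 1 ∨ A.ncard = 2 ∨ A.ncard = 3 := by omega
    rcases hsizes with h1 | h2 | h3
    · -- singleton
      obtain ⟨x, rfl⟩ := Set.ncard_eq_one.mp h1
      obtain ⟨g, hg, hgx⟩ := hvt x (φ ⟨x, rfl⟩ : V)
      refine ⟨g, hg, ?_⟩
      rintro ⟨aA, haA⟩
      obtain rfl : aA = x := haA
      exact hgx
    · -- pair
      obtain ⟨x, y, hxy, rfl⟩ := Set.ncard_eq_two.mp h2
      have hxy' : (⟨x, by simp⟩ : ({x, y} : Set V)) ≠ ⟨y, by simp⟩ :=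
        fun h => hxy (congrArg Subtype.val h)
      obtain ⟨z, hz⟩ := CH3Aux.exists_step hxy' (hconA.preconnected _ _)
      have hadj : Γ.Adj x y := by
        have hz' : Γ.Adj x z.1 := by simpa using hz
        have hz2 := z.2
        simp only [Set.mem_insert_iff, Set.mem_singleton_iff] at hz2
        rcases hz2 with h | h
        · rw [h] at hz'; exact absurd hz' (Γ.irrefl)
        · rwa [h] at hz'
      have hadj' : Γ.Adj (φ ⟨x, by simp⟩ : V) (φ ⟨y, by simp⟩ : V) := by
        have hh : (SimpleGraph.induce ({x, y} : Set V) Γ).Adj ⟨x, by simp⟩ ⟨y, by simp⟩ := by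
          simpa using hadj
        simpa using φ.map_rel_iff.mpr hh
      have hstall : ∀ u : V, StabTrans Γ G u := fun u => (hr u).1
      obtain ⟨g, hg, hgl, hgr⟩ := CH3Aux.move_edge hvt hstall hadj hadj'
      refine ⟨g, hg, ?_⟩
      rintro ⟨aA, haA⟩
      simp only [Set.mem_insert_iff, Set.mem_singleton_iff] at haA
      rcases haA with rfl | rfl
      · exact hgl
      · exact hgr
    · -- triple
      obtain ⟨a, b, c, hab, hac, hbc, rfl⟩ := Set.ncard_eq_three.mp h3
      have getadj : ∀ p q : ({a, b, c} : Set V), p ≠ q →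
          ∃ z : ({a, b, c} : Set V), Γ.Adj p.1 z.1 := by
        intro p q hpq
        obtain ⟨z, hz⟩ := CH3Aux.exists_step hpq (hconA.preconnected p q)
        exact ⟨z, by simpa using hz⟩
      have ha' : Γ.Adj a b ∨ Γ.Adj a c := by
        obtain ⟨z, hz⟩ := getadj ⟨a, by simp⟩ ⟨b, by simp⟩
          (fun h => hab (congrArg Subtype.val h))
        have hz2 := z.2
        simp only [Set.mem_insert_iff, Set.mem_singleton_iff] at hz2
        rcases hz2 with h | h | h
        · rw [h] at hz; exact absurd hz (Γ.irrefl)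
        · exact Or.inl (by rwa [h] at hz)
        · exact Or.inr (by rwa [h] at hz)
      have hb' : Γ.Adj b a ∨ Γ.Adj b c := by
        obtain ⟨z, hz⟩ := getadj ⟨b, by simp⟩ ⟨a, by simp⟩
          (fun h => hab (congrArg Subtype.val h).symm)
        have hz2 := z.2
        simp only [Set.mem_insert_iff, Set.mem_singleton_iff] at hz2
        rcases hz2 with h | h | h
        · exact Or.inl (by rwa [h] at hz)
        · rw [h] at hz; exact absurd hz (Γ.irrefl)
        · exact Or.inr (by rwa [h] at hz)
      have hc' : Γ.Adj c a ∨ Γ.Adj c b := by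
        obtain ⟨z, hz⟩ := getadj ⟨c, by simp⟩ ⟨a, by simp⟩
          (fun h => hac (congrArg Subtype.val h).symm)
        have hz2 := z.2
        simp only [Set.mem_insert_iff, Set.mem_singleton_iff] at hz2
        rcases hz2 with h | h | h
        · exact Or.inl (by rwa [h] at hz)
        · exact Or.inr (by rwa [h] at hz)
        · rw [h] at hz; exact absurd hz (Γ.irrefl)
      have hmid : ∃ m p q : V, Γ.Adj m p ∧ Γ.Adj m q ∧ p ≠ q ∧
          (∀ x ∈ ({a, b, c} : Set V), x = m ∨ x = p ∨ x = q) ∧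
          m ∈ ({a, b, c} : Set V) ∧ p ∈ ({a, b, c} : Set V) ∧
          q ∈ ({a, b, c} : Set V) := by
        have cov : ∀ x ∈ ({a, b, c} : Set V), x = a ∨ x = b ∨ x = c := by
          intro x hx
          simpa only [Set.mem_insert_iff, Set.mem_singleton_iff] using hx
        have cov2 : ∀ x ∈ ({a, b, c} : Set V), x = b ∨ x = a ∨ x = c := by
          intro x hx; rcases cov x hx with h | h | h <;> tauto
        have cov3 : ∀ x ∈ ({a, b, c} : Set V), x = c ∨ x = a ∨ x = b := by
          intro x hx; rcases cov x hx with h | h | h <;> tauto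
        rcases ha' with h1 | h1 <;> rcases hb' with h2 | h2 <;> rcases hc' with h3 | h3
        · exact ⟨a, b, c, h1, h3.symm, hbc, cov, by simp, by simp, by simp⟩
        · exact ⟨b, a, c, h2, h3.symm, hac, cov2, by simp, by simp, by simp⟩
        · exact ⟨a, b, c, h1, h3.symm, hbc, cov, by simp, by simp, by simp⟩
        · exact ⟨b, a, c, h1.symm, h2, hac, cov2, by simp, by simp, by simp⟩
        · exact ⟨a, b, c, h2.symm, h1, hbc, cov, by simp, by simp, by simp⟩
        · exact ⟨a, b, c, h2.symm, h1, hbc, cov, by simp, by simp, by simp⟩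
        · exact ⟨c, a, b, h3, h2.symm, hab, cov3, by simp, by simp, by simp⟩
        · exact ⟨c, a, b, h1.symm, h2.symm, hab, cov3, by simp, by simp, by simp⟩
      obtain ⟨m, p, q, hmp, hmq, hpq, hcov, hmA, hpA, hqA⟩ := hmid
      have hmp' : Γ.Adj (φ ⟨m, hmA⟩ : V) (φ ⟨p, hpA⟩ : V) := by
        have hh : (SimpleGraph.induce ({a, b, c} : Set V) Γ).Adj ⟨m, hmA⟩ ⟨p, hpA⟩ := by
          simpa using hmp
        simpa using φ.map_rel_iff.mpr hh
      have hmq' : Γ.Adj (φ ⟨m, hmA⟩ : V) (φ ⟨q, hqA⟩ : V) := by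
        have hh : (SimpleGraph.induce ({a, b, c} : Set V) Γ).Adj ⟨m, hmA⟩ ⟨q, hqA⟩ := by
          simpa using hmq
        simpa using φ.map_rel_iff.mpr hh
      have hpq' : (φ ⟨p, hpA⟩ : V) ≠ (φ ⟨q, hqA⟩ : V) := by
        intro h
        have hh : (⟨p, hpA⟩ : ({a, b, c} : Set V)) = ⟨q, hqA⟩ :=
          φ.toEquiv.injective (Subtype.ext h)
        exact hpq (congrArg Subtype.val hh)
      have hiff2 : Γ.Adj p q ↔ Γ.Adj (φ ⟨p, hpA⟩ : V) (φ ⟨q, hqA⟩ : V) := by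
        constructor
        · intro h
          have hh : (SimpleGraph.induce ({a, b, c} : Set V) Γ).Adj ⟨p, hpA⟩ ⟨q, hqA⟩ := by
            simpa using h
          simpa using φ.map_rel_iff.mpr hh
        · intro h
          have hh : (SimpleGraph.induce B Γ).Adj (φ ⟨p, hpA⟩) (φ ⟨q, hqA⟩) := by
            simpa using h
          simpa using φ.map_rel_iff.mp hh
      obtain ⟨g1, hg1, hg1m⟩ := hvt m (φ ⟨m, hmA⟩ : V)
      have hA1 : Γ.Adj (φ ⟨m, hmA⟩ : V) (g1 p) := hg1m ▸ CH3Aux.adj_map g1 hmp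
      have hA2 : Γ.Adj (φ ⟨m, hmA⟩ : V) (g1 q) := hg1m ▸ CH3Aux.adj_map g1 hmq
      have hne1 : g1 p ≠ g1 q := fun h => hpq (g1.toEquiv.injective h)
      have hiff3 : Γ.Adj (g1 p) (g1 q) ↔ Γ.Adj (φ ⟨p, hpA⟩ : V) (φ ⟨q, hqA⟩ : V) :=
        g1.map_rel_iff.trans hiff2
      obtain ⟨g2, hg2, hgm, hgp, hgq⟩ :=
        CH3Aux.pair_equiv_of_same_type hconn hvt hnc hgirth hr hA1 hA2 hmp' hmq'
          hne1 hpq' hiff3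
      refine ⟨g2 * g1, mul_mem hg2 hg1, ?_⟩
      rintro ⟨xA, hxA⟩
      rcases hcov xA hxA with rfl | rfl | rfl
      · show (g2 * g1) xA = _
        rw [RelIso.mul_apply, hg1m]
        exact hgm
      · show (g2 * g1) xA = _
        rw [RelIso.mul_apply]
        exact hgp
      · show (g2 * g1) xA = _
        rw [RelIso.mul_apply]
        exact hgq
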